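/- Let (γ₁,γ₂) ∈ {(1,ϖ), (1,ε^{−1}ϖ)} (the ramified cases). Then K = B^{op}·T_{γ₁,γ₂} ∪ B^{op}·w·T_{γ₁,γ₂}, where w = [[0,1],[1,0]], and the two double cosets B^{op}·T_{γ₁,γ₂} and B^{op}·w·T_{γ₁,γ₂} are disjoint. -/

import Mathlib

open Matrix
open scoped Pointwise

noncomputable section

/-- Ambient data for the paper: `E` is the unramified quadratic extension `F(√ε)` of a
nonarchimedean local field `F` of odd residual characteristic.  The field `F` is realized
as the fixed field of the nontrivial `F`-automorphism `σ` of `E`; `ν` is the discrete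
valuation of `E` (extending the valuation of `F` normalized by `ν ϖ = 1` at a uniformizer
`ϖ` of `F`, and still surjecting onto `ℤ` since `E/F` is unramified); `q` is the (odd)
cardinality of the residue field of `F` (so `q²` is that of `E`); `ε ∈ O_F^×` is a
non-square unit and `sqε = √ε` generates `E` over `F`.  The standard facts about the
norm map and squares are included as fields. -/
structure Setting (E : Type*) [Field E] where
  /-- the nontrivial `F`-automorphism of `E`, written `x̄ = σ x` -/
  σ : E →+* E
  σσ : ∀ x, σ (σ x) = x
  σ_ne_id : σ ≠ RingHom.id E
  /-- the valuation (only its values at nonzero elements matter) -/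
  ν : E → ℤ
  ν_mul : ∀ {x y : E}, x ≠ 0 → y ≠ 0 → ν (x * y) = ν x + ν y
  ν_add : ∀ {x y : E}, x ≠ 0 → y ≠ 0 → x + y ≠ 0 → min (ν x) (ν y) ≤ ν (x + y)
  ν_σ : ∀ x, ν (σ x) = ν x
  ν_surj : ∀ n : ℤ, ∃ x : E, x ≠ 0 ∧ ν x = n
  /-- a uniformizer of `F` -/
  ϖ : E
  ϖ_ne_zero : ϖ ≠ 0
  ϖ_fixed : σ ϖ = ϖ
  ν_ϖ : ν ϖ = 1
  /-- the residual cardinality of `F` -/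
  q : ℕ
  q_odd : Odd q
  one_lt_q : 1 < q
  /-- a non-square unit of `O_F` -/
  ε : E
  ε_fixed : σ ε = ε
  ε_ne_zero : ε ≠ 0
  ν_ε : ν ε = 0
  ε_nonsquare : ¬ ∃ f : E, σ f = f ∧ f * f = ε
  /-- a square root `√ε ∈ E` of `ε` -/
  sqε : E
  sqε_sq : sqε * sqε = ε
  sqε_conj : σ sqε = -sqε
  /-- `E = F(√ε)` -/
  generates : ∀ x : E, ∃ a b : E, σ a = a ∧ σ b = b ∧ x = a + b * sqε
  /-- the norm maps `O_E^×` onto `O_F^×` -/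
  norm_surj_units : ∀ y : E, σ y = y → y ≠ 0 → ν y = 0 →
    ∃ x : E, x ≠ 0 ∧ ν x = 0 ∧ x * σ x = y
  /-- the norm maps `1 + p_E^d` onto `1 + p_F^d` for every `d ≥ 1` -/
  norm_surj_one_add : ∀ d : ℤ, 1 ≤ d → ∀ y : E, σ y = y → (y - 1 = 0 ∨ d ≤ ν (y - 1)) →
    ∃ x : E, (x - 1 = 0 ∨ d ≤ ν (x - 1)) ∧ x * σ x = y
  /-- the residue field of `F` has `q` elements -/
  residue_F : ∃ R : Finset E, R.card = q ∧ (∀ r ∈ R, σ r = r ∧ (r = 0 ∨ 0 ≤ ν r)) ∧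
    ∀ x : E, σ x = x → (x = 0 ∨ 0 ≤ ν x) →
      ∃! r, r ∈ R ∧ (x - r = 0 ∨ 1 ≤ ν (x - r))
  /-- the residue field of `E` has `q²` elements -/
  residue_E : ∃ R : Finset E, R.card = q ^ 2 ∧ (∀ r ∈ R, r = 0 ∨ 0 ≤ ν r) ∧
    ∀ x : E, (x = 0 ∨ 0 ≤ ν x) →
      ∃! r, r ∈ R ∧ (x - r = 0 ∨ 1 ≤ ν (x - r))
  /-- Hensel: a unit of `O_E` that is a square modulo `p_E` is a square (residue char. odd) -/
  hensel_sq : ∀ u w : E, u ≠ 0 → ν u = 0 → w ≠ 0 → ν w = 0 →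
    (w * w - u = 0 ∨ 1 ≤ ν (w * w - u)) → ∃ v : E, v * v = u

namespace Setting

variable {E : Type*} [Field E] (S : Setting E)

/-- `x` lies in the ring of integers `O_E`. -/
def inOE (x : E) : Prop := x = 0 ∨ 0 ≤ S.ν x

/-- `x` lies in the (fractional, if `d ≤ 0`) ideal `p_E^d`. -/
def inpE (d : ℤ) (x : E) : Prop := x = 0 ∨ d ≤ S.ν x

/-- `x` is a unit of `O_E`. -/
def unitOE (x : E) : Prop := x ≠ 0 ∧ S.ν x = 0

/-- `x` lies in the subfield `F` (the fixed field of `σ`). -/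
def inF (x : E) : Prop := S.σ x = x

/-- `x` is a unit of `O_F`. -/
def unitOF (x : E) : Prop := S.σ x = x ∧ x ≠ 0 ∧ S.ν x = 0

/-- `x` lies in `E¹`, i.e. has norm one. -/
def normOne (x : E) : Prop := x * S.σ x = 1

/-- `x ∈ √ε·F`. -/
def inSqεF (x : E) : Prop := ∃ f : E, S.σ f = f ∧ x = S.sqε * f

/-- Entrywise application of `σ` to a matrix, `ḡ`. -/
def mbar (g : Matrix (Fin 2) (Fin 2) E) : Matrix (Fin 2) (Fin 2) E :=
  Matrix.of fun i j => S.σ (g i j)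

/-- The antidiagonal matrix `w = [[0,1],[1,0]]` defining the hermitian form. -/
def wmat (_S : Setting E) : Matrix (Fin 2) (Fin 2) E := !![0, 1; 1, 0]

/-- Membership in `G = U(1,1)(F) = {g : ḡᵀ·w·g = w}`. -/
def inG (g : Matrix (Fin 2) (Fin 2) E) : Prop :=
  (S.mbar g)ᵀ * S.wmat * g = S.wmat

/-- `G = U(1,1)(F)`, as a set of 2×2 matrices over `E`. -/
def Gset : Set (Matrix (Fin 2) (Fin 2) E) := {g | S.inG g}

/-- `G_der = SU(1,1)(F) = {g ∈ G : det g = 1}`. -/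
def Gder : Set (Matrix (Fin 2) (Fin 2) E) := {g | S.inG g ∧ g.det = 1}

/-- The standard maximal compact subgroup `K` of `G` (entries in `O_E`). -/
def Kset : Set (Matrix (Fin 2) (Fin 2) E) := {g | S.inG g ∧ ∀ i j, S.inOE (g i j)}

/-- The congruence subgroup `K_d = {k ∈ K : k − 1 ∈ p_E^d·M₂(O_E)}`. -/
def Kfil (d : ℤ) : Set (Matrix (Fin 2) (Fin 2) E) :=
  {g | g ∈ S.Kset ∧ ∀ i j, S.inpE d ((g - 1) i j)}

/-- The subgroup `B` of upper triangular matrices in `K`. -/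
def Bset : Set (Matrix (Fin 2) (Fin 2) E) := {g | g ∈ S.Kset ∧ g 1 0 = 0}

/-- The subgroup `B^op` of lower triangular matrices in `K`. -/
def Bop : Set (Matrix (Fin 2) (Fin 2) E) := {g | g ∈ S.Kset ∧ g 0 1 = 0}

/-- The center `Z = {z·I : z ∈ E¹}` of `G`. -/
def Zset : Set (Matrix (Fin 2) (Fin 2) E) :=
  {g | ∃ z : E, S.normOne z ∧ g = z • (1 : Matrix (Fin 2) (Fin 2) E)}

/-- The matrix `α^t = diag(ϖ^{−t}, ϖ^t)`. -/
def αmat (t : ℕ) : Matrix (Fin 2) (Fin 2) E := !![(S.ϖ ^ t)⁻¹, 0; 0, S.ϖ ^ t]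

/-- The matrix `η = diag(1, ϖ)` (it normalizes `G`). -/
def ηmat : Matrix (Fin 2) (Fin 2) E := !![1, 0; 0, S.ϖ]

/-- The matrix `η⁻¹ = diag(1, ϖ⁻¹)`. -/
def ηinv : Matrix (Fin 2) (Fin 2) E := !![1, 0; 0, S.ϖ⁻¹]

/-- The torus `T_{γ₁,γ₂} = {[[a,bγ₁],[bγ₂,a]] : a·ā + b·b̄·γ₁γ₂ = 1, ā·b ∈ √ε·F}`. -/
def Tset (γ₁ γ₂ : E) : Set (Matrix (Fin 2) (Fin 2) E) :=
  {g | ∃ a b : E, g = !![a, b * γ₁; b * γ₂, a] ∧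
    a * S.σ a + b * S.σ b * (γ₁ * γ₂) = 1 ∧ S.inSqεF (S.σ a * b)}

/-- The Moy–Prasad filtration subgroup `G_{y,r}` of `G` (for `r > 0`). -/
def Gfil (y r : ℚ) : Set (Matrix (Fin 2) (Fin 2) E) :=
  {g | S.inG g ∧ S.inpE ⌈r⌉ (g 0 0 - 1) ∧ S.inpE ⌈r⌉ (g 1 1 - 1) ∧
    S.inpE ⌈r - y⌉ (g 0 1) ∧ S.inpE ⌈r + y⌉ (g 1 0)}

/-- `G_{y,0+} = ⋃_{r>0} G_{y,r}`. -/
def Gfil0plus (y : ℚ) : Set (Matrix (Fin 2) (Fin 2) E) :=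
  {g | ∃ r : ℚ, 0 < r ∧ g ∈ S.Gfil y r}

end Setting


namespace Setting

variable {E : Type*} [Field E] (S : Setting E)

lemma ν_one : S.ν 1 = 0 := by
  have h := S.ν_mul (x := 1) (y := 1) one_ne_zero one_ne_zero
  simp at h; omega

lemma ν_neg {x : E} (hx : x ≠ 0) : S.ν (-x) = S.ν x := by
  have h1 : S.ν ((-1 : E) * (-1)) = S.ν (-1) + S.ν (-1) :=
    S.ν_mul (by norm_num) (by norm_num)
  simp at h1
  rw [S.ν_one] at h1
  have h2 : S.ν ((-1 : E) * x) = S.ν (-1) + S.ν x := S.ν_mul (by norm_num) hx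
  rw [neg_one_mul] at h2
  omega

lemma ν_inv {x : E} (hx : x ≠ 0) : S.ν x⁻¹ = - S.ν x := by
  have h : S.ν (x * x⁻¹) = S.ν x + S.ν x⁻¹ := S.ν_mul hx (inv_ne_zero hx)
  rw [mul_inv_cancel₀ hx, S.ν_one] at h
  omega

/-- ultrametric equality when valuations differ -/
lemma ν_add_eq_left {x y : E} (hx : x ≠ 0) (hy : y ≠ 0) (hxy : x + y ≠ 0)
    (h : S.ν x < S.ν y) : S.ν (x + y) = S.ν x := by
  have h1 := S.ν_add hx hy hxy
  rw [min_eq_left h.le] at h1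
  rcases lt_or_eq_of_le h1 with h2 | h2
  · exfalso
    have h3 := S.ν_add (x := x + y) (y := -y) hxy (neg_ne_zero.mpr hy) (by simpa using hx)
    simp only [add_neg_cancel_right] at h3
    rw [S.ν_neg hy] at h3
    omega
  · omega


lemma inOE_mul {x y : E} (hx : S.inOE x) (hy : S.inOE y) : S.inOE (x * y) := by
  rcases hx with h | h; · left; simp [h]
  rcases hy with h' | h'; · left; simp [h']
  by_cases hx0 : x = 0; · left; simp [hx0]
  by_cases hy0 : y = 0; · left; simp [hy0]
  right; rw [S.ν_mul hx0 hy0]; omega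

lemma inOE_add {x y : E} (hx : S.inOE x) (hy : S.inOE y) : S.inOE (x + y) := by
  by_cases hx0 : x = 0; · simpa [hx0] using hy
  by_cases hy0 : y = 0; · simpa [hy0] using hx
  by_cases hxy : x + y = 0; · left; exact hxy
  right
  have h := S.ν_add hx0 hy0 hxy
  have h1 : 0 ≤ S.ν x := hx.resolve_left hx0
  have h2 : 0 ≤ S.ν y := hy.resolve_left hy0
  omega

lemma inG_mul {g h : Matrix (Fin 2) (Fin 2) E} (hg : S.inG g) (hh : S.inG h) :
    S.inG (g * h) := by
  have hbar : S.mbar (g * h) = S.mbar g * S.mbar h := by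
    ext i j
    simp [mbar, Matrix.mul_apply, Fin.sum_univ_two, _root_.map_add, _root_.map_mul]
  unfold inG at *
  rw [hbar, Matrix.transpose_mul]
  calc (S.mbar h)ᵀ * (S.mbar g)ᵀ * S.wmat * (g * h)
      = (S.mbar h)ᵀ * ((S.mbar g)ᵀ * S.wmat * g * h) := by simp only [Matrix.mul_assoc]
    _ = (S.mbar h)ᵀ * (S.wmat * h) := by rw [hg]
    _ = (S.mbar h)ᵀ * S.wmat * h := by rw [Matrix.mul_assoc]
    _ = S.wmat := hh

lemma ww_one : S.wmat * S.wmat = 1 := by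
  simp [wmat, Matrix.mul_fin_two, Matrix.one_fin_two]

lemma w_inK : S.wmat ∈ S.Kset := by
  constructor
  · unfold inG
    have : (S.mbar S.wmat)ᵀ = S.wmat := by
      ext i j; fin_cases i <;> fin_cases j <;> simp [mbar, wmat]
    rw [this, S.ww_one, Matrix.one_mul]
  · intro i j
    rcases show S.wmat i j = 0 ∨ S.wmat i j = 1 by
        fin_cases i <;> fin_cases j <;> simp [wmat] with h | h
    · rw [h]; exact Or.inl rfl
    · rw [h]; exact Or.inr S.ν_one.ge

lemma Kset_mul {g h : Matrix (Fin 2) (Fin 2) E} (hg : g ∈ S.Kset) (hh : h ∈ S.Kset) :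
    g * h ∈ S.Kset := by
  refine ⟨S.inG_mul hg.1 hh.1, fun i j => ?_⟩
  rw [Matrix.mul_apply, Fin.sum_univ_two]
  exact S.inOE_add (S.inOE_mul (hg.2 i 0) (hh.2 0 j)) (S.inOE_mul (hg.2 i 1) (hh.2 1 j))

/-- the four "column" equations of unitarity -/
lemma inG_iff (g : Matrix (Fin 2) (Fin 2) E) : S.inG g ↔
    (S.σ (g 0 0) * g 1 0 + S.σ (g 1 0) * g 0 0 = 0 ∧
     S.σ (g 0 0) * g 1 1 + S.σ (g 1 0) * g 0 1 = 1 ∧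
     S.σ (g 0 1) * g 1 0 + S.σ (g 1 1) * g 0 0 = 1 ∧
     S.σ (g 0 1) * g 1 1 + S.σ (g 1 1) * g 0 1 = 0) := by
  unfold inG wmat mbar
  rw [← Matrix.ext_iff]
  simp only [Fin.forall_fin_two, Matrix.mul_apply, Fin.sum_univ_two]
  simp [Matrix.transpose_apply]
  constructor
  · rintro ⟨⟨h1, h2⟩, h3, h4⟩
    exact ⟨by linear_combination h1, by linear_combination h2,
      by linear_combination h3, by linear_combination h4⟩
  · rintro ⟨h1, h2, h3, h4⟩
    exact ⟨⟨by linear_combination h1, by linear_combination h2⟩,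
      by linear_combination h3, by linear_combination h4⟩

/-- the "row" equations of unitarity -/
lemma inG_rows {g : Matrix (Fin 2) (Fin 2) E} (hg : S.inG g) :
    g 0 0 * S.σ (g 1 1) + g 0 1 * S.σ (g 1 0) = 1 ∧
    g 0 0 * S.σ (g 0 1) + g 0 1 * S.σ (g 0 0) = 0 := by
  have h1 : (S.wmat * (S.mbar g)ᵀ * S.wmat) * g = 1 := by
    unfold inG at hg
    calc (S.wmat * (S.mbar g)ᵀ * S.wmat) * g
        = S.wmat * ((S.mbar g)ᵀ * S.wmat * g) := by
          rw [Matrix.mul_assoc, Matrix.mul_assoc, Matrix.mul_assoc]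
      _ = 1 := by rw [hg, S.ww_one]
  have h2 : g * (S.wmat * (S.mbar g)ᵀ * S.wmat) = 1 := mul_eq_one_comm.mp h1
  have e01 := congrArg (fun m => m 0 1) h2
  have e00 := congrArg (fun m => m 0 0) h2
  simp only [Matrix.mul_apply, Fin.sum_univ_two, wmat, mbar] at e01 e00
  simp at e01 e00
  constructor
  · linear_combination e00
  · linear_combination e01


lemma σ_ne_zero {x : E} (hx : x ≠ 0) : S.σ x ≠ 0 :=
  fun h => hx (S.σ.injective (by rw [h, map_zero]))

lemma sqε_ne_zero : S.sqε ≠ 0 := by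
  intro h
  exact S.ε_ne_zero (by rw [← S.sqε_sq, h, mul_zero])

lemma skew_inSqεF {x : E} (h : S.σ x = -x) : S.inSqεF x := by
  refine ⟨S.sqε⁻¹ * x, ?_, ?_⟩
  · rw [_root_.map_mul, map_inv₀, S.sqε_conj, h]
    field_simp
  · rw [← mul_assoc, mul_inv_cancel₀ S.sqε_ne_zero, one_mul]

lemma inSqεF_skew {x : E} (h : S.inSqεF x) : S.σ x = -x := by
  obtain ⟨f, hf, rfl⟩ := h
  rw [_root_.map_mul, S.sqε_conj, hf, neg_mul]

lemma torus_val {γ₂ a b : E} (hγ0 : γ₂ ≠ 0) (hγν : S.ν γ₂ = 1)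
    (hnorm : a * S.σ a + b * S.σ b * γ₂ = 1) :
    a ≠ 0 ∧ S.ν a = 0 ∧ (b = 0 ∨ 0 ≤ S.ν b) := by
  by_cases hb : b = 0
  · subst hb
    rw [zero_mul, zero_mul, add_zero] at hnorm
    have ha : a ≠ 0 := by rintro rfl; simp at hnorm
    have hν : S.ν (a * S.σ a) = S.ν a + S.ν (S.σ a) := S.ν_mul ha (S.σ_ne_zero ha)
    rw [hnorm, S.ν_one, S.ν_σ] at hν
    exact ⟨ha, by omega, Or.inl rfl⟩
  · have ha : a ≠ 0 := by
      rintro rfl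
      rw [zero_mul, zero_add] at hnorm
      have h1 : S.ν (b * S.σ b * γ₂) = S.ν b + S.ν (S.σ b) + S.ν γ₂ := by
        rw [S.ν_mul (mul_ne_zero hb (S.σ_ne_zero hb)) hγ0, S.ν_mul hb (S.σ_ne_zero hb)]
      rw [hnorm, S.ν_one, S.ν_σ, hγν] at h1
      omega
    set x := a * S.σ a with hxdef
    set y := b * S.σ b * γ₂ with hydef
    have hx0 : x ≠ 0 := mul_ne_zero ha (S.σ_ne_zero ha)
    have hy0 : y ≠ 0 := mul_ne_zero (mul_ne_zero hb (S.σ_ne_zero hb)) hγ0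
    have hνx : S.ν x = 2 * S.ν a := by
      rw [hxdef, S.ν_mul ha (S.σ_ne_zero ha), S.ν_σ]; ring
    have hνy : S.ν y = 2 * S.ν b + 1 := by
      rw [hydef, S.ν_mul (mul_ne_zero hb (S.σ_ne_zero hb)) hγ0,
        S.ν_mul hb (S.σ_ne_zero hb), S.ν_σ, hγν]; ring
    have hxy : x + y ≠ 0 := by rw [hnorm]; exact one_ne_zero
    rcases lt_trichotomy (S.ν x) (S.ν y) with h | h | h
    · have := S.ν_add_eq_left hx0 hy0 hxy h
      rw [hnorm, S.ν_one] at this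
      refine ⟨ha, by omega, Or.inr (by omega)⟩
    · omega
    · have := S.ν_add_eq_left hy0 hx0 (by rwa [add_comm]) h
      rw [add_comm, hnorm, S.ν_one] at this
      omega

lemma T_subset_K {γ₁ γ₂ : E} (hγ₁ : γ₁ = 1) (hγF : S.σ γ₂ = γ₂) (hγ0 : γ₂ ≠ 0)
    (hγν : S.ν γ₂ = 1) : S.Tset γ₁ γ₂ ⊆ S.Kset := by
  subst hγ₁
  rintro t ⟨a, b, rfl, hnorm, hskew⟩
  rw [one_mul] at hnorm
  have hs : a * S.σ b = -(S.σ a * b) := by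
    have h2 := S.inSqεF_skew hskew
    rw [_root_.map_mul, S.σσ] at h2
    linear_combination h2
  obtain ⟨ha, hνa, hb⟩ := S.torus_val hγ0 hγν hnorm
  constructor
  · rw [S.inG_iff]
    refine ⟨?_, ?_, ?_, ?_⟩ <;>
      simp only [Matrix.of_apply, Matrix.cons_val_zero, Matrix.cons_val_one,
        Matrix.head_cons, mul_one, _root_.map_mul, hγF]
    · linear_combination γ₂ * hs
    · linear_combination hnorm
    · linear_combination hnorm
    · linear_combination hs
  · intro i j
    have hOa : S.inOE a := Or.inr hνa.ge
    have hOb : S.inOE b := by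
      rcases hb with h | h; · exact Or.inl h
      · exact Or.inr h
    have hOγ : S.inOE γ₂ := Or.inr (by omega)
    have hO1 : S.inOE (b * 1) := by rwa [mul_one]
    fin_cases i <;> fin_cases j <;>
      simp only [Matrix.of_apply, Matrix.cons_val_zero, Matrix.cons_val_one,
        Matrix.head_cons, Fin.isValue, Fin.zero_eta, Fin.mk_one]
    · exact hOa
    · exact hO1
    · exact S.inOE_mul hOb hOγ
    · exact hOa


/-- the "conjugate" torus element, which is a two-sided inverse -/
lemma tinv_data {γ₁ γ₂ a b : E} (hγ₁ : γ₁ = 1) (hγF : S.σ γ₂ = γ₂)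
    (hnorm : a * S.σ a + b * S.σ b * (γ₁ * γ₂) = 1) (hskew : S.inSqεF (S.σ a * b)) :
    (!![S.σ a, S.σ b * γ₁; S.σ b * γ₂, S.σ a] ∈ S.Tset γ₁ γ₂) ∧
    !![a, b * γ₁; b * γ₂, a] * !![S.σ a, S.σ b * γ₁; S.σ b * γ₂, S.σ a] = 1 ∧
    !![S.σ a, S.σ b * γ₁; S.σ b * γ₂, S.σ a] * !![a, b * γ₁; b * γ₂, a] = 1 := by
  subst hγ₁
  rw [one_mul] at hnorm
  have hs : a * S.σ b = -(S.σ a * b) := by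
    have h2 := S.inSqεF_skew hskew
    rw [_root_.map_mul, S.σσ] at h2
    linear_combination h2
  refine ⟨⟨S.σ a, S.σ b, rfl, ?_, ?_⟩, ?_, ?_⟩
  · rw [S.σσ, S.σσ, one_mul]
    linear_combination hnorm
  · refine S.skew_inSqεF ?_
    rw [S.σσ, _root_.map_mul, S.σσ]
    linear_combination hs
  · rw [Matrix.mul_fin_two, Matrix.one_fin_two, ← Matrix.ext_iff]
    simp only [Fin.forall_fin_two, Matrix.of_apply, Matrix.cons_val_zero, Matrix.cons_val_one,
      Matrix.head_cons]
    refine ⟨⟨?_, ?_⟩, ?_, ?_⟩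
    · linear_combination hnorm
    · linear_combination hs
    · linear_combination γ₂ * hs
    · linear_combination hnorm
  · rw [Matrix.mul_fin_two, Matrix.one_fin_two, ← Matrix.ext_iff]
    simp only [Fin.forall_fin_two, Matrix.of_apply, Matrix.cons_val_zero, Matrix.cons_val_one,
      Matrix.head_cons]
    refine ⟨⟨?_, ?_⟩, ?_, ?_⟩
    · linear_combination hnorm
    · linear_combination hs
    · linear_combination γ₂ * hs
    · linear_combination hnorm

/-- existence of a torus element with prescribed ratio `-σ r` of coordinates -/
lemma exists_torus_unit {γ₂ : E} (hγF : S.σ γ₂ = γ₂) (hγ0 : γ₂ ≠ 0) (hγν : S.ν γ₂ = 1)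
    {r : E} (hrO : r = 0 ∨ 0 ≤ S.ν r) :
    ∃ a : E, a ≠ 0 ∧ S.ν a = 0 ∧ a * S.σ a * (1 + r * S.σ r * γ₂) = 1 := by
  by_cases hr : r = 0
  · exact ⟨1, one_ne_zero, S.ν_one, by simp [hr]⟩
  have hνr : 0 ≤ S.ν r := hrO.resolve_left hr
  set z := r * S.σ r * γ₂ with hz
  have hz0 : z ≠ 0 := mul_ne_zero (mul_ne_zero hr (S.σ_ne_zero hr)) hγ0
  have hνz : S.ν z = 2 * S.ν r + 1 := by
    rw [hz, S.ν_mul (mul_ne_zero hr (S.σ_ne_zero hr)) hγ0, S.ν_mul hr (S.σ_ne_zero hr),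
      S.ν_σ, hγν]; ring
  set y := 1 + z with hy
  have hy0 : y ≠ 0 := by
    intro h
    have hz1 : z = -1 := by linear_combination h
    have := S.ν_neg (x := (1 : E)) one_ne_zero
    rw [← hz1, S.ν_one] at this
    omega
  have hνy : S.ν y = 0 := by
    have := S.ν_add_eq_left (x := (1 : E)) one_ne_zero hz0 (by rwa [← hy])
      (by rw [S.ν_one]; omega)
    rw [← hy] at this
    rw [this, S.ν_one]
  have hσz : S.σ z = z := by
    rw [hz, _root_.map_mul, _root_.map_mul, S.σσ, hγF]
    ring
  have hσy : S.σ y = y := by rw [hy, map_add, _root_.map_one, hσz]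
  have hw0 : y⁻¹ ≠ 0 := inv_ne_zero hy0
  have hσw : S.σ y⁻¹ = y⁻¹ := by rw [map_inv₀, hσy]
  have hw1 : y⁻¹ - 1 = -z * y⁻¹ := by
    field_simp
    linear_combination -hy
  have hνw1 : (y⁻¹ - 1 = 0) ∨ (1 : ℤ) ≤ S.ν (y⁻¹ - 1) := by
    right
    rw [hw1, S.ν_mul (neg_ne_zero.mpr hz0) hw0, S.ν_neg hz0, S.ν_inv hy0]
    omega
  obtain ⟨x, _, hx⟩ := S.norm_surj_one_add 1 le_rfl y⁻¹ hσw hνw1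
  have hx0 : x ≠ 0 := by
    intro h; rw [h, zero_mul] at hx; exact hw0 hx.symm
  have hνx : S.ν x = 0 := by
    have := S.ν_mul hx0 (S.σ_ne_zero hx0)
    rw [hx, S.ν_σ, S.ν_inv hy0, hνy] at this
    omega
  refine ⟨x, hx0, hνx, ?_⟩
  rw [hx]
  exact inv_mul_cancel₀ hy0


/-- elements of `B^op` have unit upper-left entry -/
lemma Bop_unit {p : Matrix (Fin 2) (Fin 2) E} (hp : p ∈ S.Bop) :
    p 0 0 ≠ 0 ∧ S.ν (p 0 0) = 0 := by
  have hrow := (S.inG_rows hp.1.1).1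
  rw [hp.2, zero_mul, add_zero] at hrow
  have h0 : p 0 0 ≠ 0 := by
    intro h; rw [h, zero_mul] at hrow; exact one_ne_zero hrow.symm
  have h1 : p 1 1 ≠ 0 := by
    intro h; rw [h, map_zero, mul_zero] at hrow; exact one_ne_zero hrow.symm
  have hν := S.ν_mul h0 (S.σ_ne_zero h1)
  rw [hrow, S.ν_one, S.ν_σ] at hν
  have hν1 : 0 ≤ S.ν (p 0 0) := (hp.1.2 0 0).resolve_left h0
  have hν2 : 0 ≤ S.ν (p 1 1) := (hp.1.2 1 1).resolve_left h1
  exact ⟨h0, by omega⟩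

lemma inpE1_mul {x u : E} (hx : x = 0 ∨ 1 ≤ S.ν x) (hu : S.inOE u) :
    x * u = 0 ∨ 1 ≤ S.ν (x * u) := by
  rcases hx with h | h; · left; rw [h, zero_mul]
  rcases hu with h' | h'; · left; rw [h', mul_zero]
  by_cases hx0 : x = 0; · left; rw [hx0, zero_mul]
  by_cases hu0 : u = 0; · left; rw [hu0, mul_zero]
  right; rw [S.ν_mul hx0 hu0]; omega

lemma inpE1_add_ne_one {x y : E} (hx : x = 0 ∨ 1 ≤ S.ν x) (hy : y = 0 ∨ 1 ≤ S.ν y) :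
    x + y ≠ 1 := by
  intro h
  by_cases hx0 : x = 0
  · rw [hx0, zero_add] at h
    rcases hy with h2 | h2
    · exact one_ne_zero (h ▸ h2)
    · rw [h, S.ν_one] at h2; omega
  by_cases hy0 : y = 0
  · rw [hy0, add_zero] at h
    rcases hx with h1 | h1
    · exact one_ne_zero (h ▸ h1)
    · rw [h, S.ν_one] at h1; omega
  have h1 : 1 ≤ S.ν x := hx.resolve_left hx0
  have h2 : 1 ≤ S.ν y := hy.resolve_left hy0
  have h3 : x + y ≠ 0 := by rw [h]; exact one_ne_zero
  have := S.ν_add hx0 hy0 h3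
  rw [h, S.ν_one] at this
  omega


lemma ν_div {x y : E} (hx : x ≠ 0) (hy : y ≠ 0) : S.ν (x / y) = S.ν x - S.ν y := by
  rw [div_eq_mul_inv, S.ν_mul hx (inv_ne_zero hy), S.ν_inv hy]; ring

lemma inOE_σ {x : E} (hx : S.inOE x) : S.inOE (S.σ x) := by
  by_cases h0 : x = 0
  · left; rw [h0, map_zero]
  · right; rw [S.ν_σ]; exact hx.resolve_left h0

/-- the key decomposition: every element of `K` lies in one of the two double cosets -/
lemma key_mem {γ₂ : E} (hγF : S.σ γ₂ = γ₂) (hγ0 : γ₂ ≠ 0) (hγν : S.ν γ₂ = 1)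
    {k : Matrix (Fin 2) (Fin 2) E} (hk : k ∈ S.Kset) :
    k ∈ (S.Bop * S.Tset 1 γ₂) ∪ (S.Bop * {S.wmat} * S.Tset 1 γ₂) := by
  have hO := hk.2
  have hr1 := (S.inG_rows hk.1).1
  have hr2 := (S.inG_rows hk.1).2
  by_cases hA : k 0 0 ≠ 0 ∧ S.ν (k 0 0) = 0
  · -- the `B^op · T` case
    obtain ⟨hA0, hAν⟩ := hA
    have hσA0 := S.σ_ne_zero hA0
    set r := k 0 1 / k 0 0 with hrdef
    have hσr : S.σ r = -r := by
      rw [hrdef, map_div₀]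
      field_simp
      linear_combination hr2
    have hrO : r = 0 ∨ 0 ≤ S.ν r := by
      by_cases hB0 : k 0 1 = 0
      · left; rw [hrdef, hB0, zero_div]
      · right
        rw [hrdef, S.ν_div hB0 hA0, hAν]
        have := (hO 0 1).resolve_left hB0
        omega
    obtain ⟨a, ha0, haν, haeq⟩ := S.exists_torus_unit hγF hγ0 hγν hrO
    rw [hσr] at haeq
    set b := r * a with hbdef
    have hσb : S.σ b = -(r * S.σ a) := by
      rw [hbdef, _root_.map_mul, hσr]; ring
    have hnorm : a * S.σ a + b * S.σ b * (1 * γ₂) = 1 := by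
      rw [hσb, hbdef, one_mul]
      linear_combination haeq
    have hskew : S.inSqεF (S.σ a * b) := by
      refine S.skew_inSqεF ?_
      rw [_root_.map_mul, S.σσ, hσb, hbdef]; ring
    obtain ⟨ht'mem, _, hprod2⟩ := S.tinv_data rfl hγF hnorm hskew
    have htmem : (!![a, b * 1; b * γ₂, a]) ∈ S.Tset 1 γ₂ := ⟨a, b, rfl, hnorm, hskew⟩
    set t := !![a, b * 1; b * γ₂, a] with htdef
    set t' := !![S.σ a, S.σ b * 1; S.σ b * γ₂, S.σ a] with ht'def
    have hbK : k * t' ∈ S.Kset := S.Kset_mul hk (S.T_subset_K rfl hγF hγ0 hγν ht'mem)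
    have hb01 : (k * t') 0 1 = 0 := by
      rw [Matrix.mul_apply, Fin.sum_univ_two]
      have e1 : t' 0 1 = S.σ b * 1 := rfl
      have e2 : t' 1 1 = S.σ a := rfl
      rw [e1, e2, hσb, hrdef]
      field_simp
      ring
    have hkeq : (k * t') * t = k := by
      rw [Matrix.mul_assoc, hprod2, Matrix.mul_one]
    exact Or.inl (hkeq ▸ Set.mul_mem_mul ⟨hbK, hb01⟩ htmem)
  · -- the `B^op · w · T` case
    have hA' : k 0 0 = 0 ∨ 1 ≤ S.ν (k 0 0) := by
      by_cases h0 : k 0 0 = 0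
      · exact Or.inl h0
      · right
        have h1 := (hO 0 0).resolve_left h0
        have h2 : ¬ S.ν (k 0 0) = 0 := fun h => hA ⟨h0, h⟩
        omega
    have hB : k 0 1 ≠ 0 ∧ S.ν (k 0 1) = 0 := by
      by_contra hB
      have hB' : k 0 1 = 0 ∨ 1 ≤ S.ν (k 0 1) := by
        by_cases h0 : k 0 1 = 0
        · exact Or.inl h0
        · right
          have h1 := (hO 0 1).resolve_left h0
          have h2 : ¬ S.ν (k 0 1) = 0 := fun h => hB ⟨h0, h⟩
          omega
      exact S.inpE1_add_ne_one (S.inpE1_mul hA' (S.inOE_σ (hO 1 1)))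
        (S.inpE1_mul hB' (S.inOE_σ (hO 1 0))) hr1
    obtain ⟨hB0, hBν⟩ := hB
    have hσB0 := S.σ_ne_zero hB0
    have hden : S.σ (k 0 1) * γ₂ ≠ 0 := mul_ne_zero hσB0 hγ0
    set s := S.σ (k 0 0) / (S.σ (k 0 1) * γ₂) with hsdef
    have hσs : S.σ s = -s := by
      rw [hsdef, map_div₀, _root_.map_mul, S.σσ, S.σσ, hγF]
      field_simp
      linear_combination hr2
    have hsO : s = 0 ∨ 0 ≤ S.ν s := by
      by_cases h0 : k 0 0 = 0
      · left; rw [hsdef, h0, map_zero, zero_div]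
      · right
        have hAν : 1 ≤ S.ν (k 0 0) := hA'.resolve_left h0
        rw [hsdef, S.ν_div (S.σ_ne_zero h0) hden, S.ν_σ, S.ν_mul hσB0 hγ0, S.ν_σ, hBν, hγν]
        omega
    obtain ⟨a, ha0, haν, haeq⟩ := S.exists_torus_unit hγF hγ0 hγν hsO
    rw [hσs] at haeq
    set b := -(s * a) with hbdef
    have hσb : S.σ b = s * S.σ a := by
      rw [hbdef, map_neg, _root_.map_mul, hσs]; ring
    have hnorm : a * S.σ a + b * S.σ b * (1 * γ₂) = 1 := by
      rw [hσb, hbdef, one_mul]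
      linear_combination haeq
    have hskew : S.inSqεF (S.σ a * b) := by
      refine S.skew_inSqεF ?_
      rw [_root_.map_mul, S.σσ, hσb, hbdef]; ring
    obtain ⟨ht'mem, _, hprod2⟩ := S.tinv_data rfl hγF hnorm hskew
    have htmem : (!![a, b * 1; b * γ₂, a]) ∈ S.Tset 1 γ₂ := ⟨a, b, rfl, hnorm, hskew⟩
    set t := !![a, b * 1; b * γ₂, a] with htdef
    set t' := !![S.σ a, S.σ b * 1; S.σ b * γ₂, S.σ a] with ht'def
    have hmK : k * t' ∈ S.Kset := S.Kset_mul hk (S.T_subset_K rfl hγF hγ0 hγν ht'mem)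
    have hm00 : (k * t') 0 0 = 0 := by
      rw [Matrix.mul_apply, Fin.sum_univ_two]
      have e1 : t' 0 0 = S.σ a := rfl
      have e2 : t' 1 0 = S.σ b * γ₂ := rfl
      rw [e1, e2, hσb, hsdef]
      field_simp
      linear_combination S.σ a * hr2
    have hbmK : (k * t') * S.wmat ∈ S.Kset := S.Kset_mul hmK S.w_inK
    have hb01 : ((k * t') * S.wmat) 0 1 = 0 := by
      rw [Matrix.mul_apply, Fin.sum_univ_two]
      have e1 : S.wmat 0 1 = 1 := rfl
      have e2 : S.wmat 1 1 = 0 := rfl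
      rw [e1, e2, mul_one, mul_zero, add_zero, hm00]
    have hww : ((k * t') * S.wmat) * S.wmat = k * t' := by
      rw [Matrix.mul_assoc, S.ww_one, Matrix.mul_one]
    have hkeq : (((k * t') * S.wmat) * S.wmat) * t = k := by
      rw [hww, Matrix.mul_assoc, hprod2, Matrix.mul_one]
    exact Or.inr (hkeq ▸ Set.mul_mem_mul (Set.mul_mem_mul ⟨hbmK, hb01⟩ rfl) htmem)

/-- disjointness of the two double cosets -/
lemma key_disj {γ₂ : E} (hγ0 : γ₂ ≠ 0) (hγν : S.ν γ₂ = 1) :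
    Disjoint (S.Bop * S.Tset 1 γ₂) (S.Bop * {S.wmat} * S.Tset 1 γ₂) := by
  rw [Set.disjoint_left]
  rintro m hm1 hm2
  obtain ⟨p, hp, t, ht, hpt0⟩ := hm1
  obtain ⟨a, b, rfl, hnorm, -⟩ := ht
  have hpt : p * !![a, b * 1; b * γ₂, a] = m := hpt0
  rw [one_mul] at hnorm
  obtain ⟨ha0, haν, -⟩ := S.torus_val hγ0 hγν hnorm
  obtain ⟨hp0, hpν⟩ := S.Bop_unit hp
  have hm00 : m 0 0 = p 0 0 * a := by
    rw [← hpt, Matrix.mul_apply, Fin.sum_univ_two]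
    have e1 : (!![a, b * 1; b * γ₂, a]) 0 0 = a := rfl
    have e2 : (!![a, b * 1; b * γ₂, a]) 1 0 = b * γ₂ := rfl
    rw [e1, e2, hp.2, zero_mul, add_zero]
  have hm0 : m 0 0 ≠ 0 := by rw [hm00]; exact mul_ne_zero hp0 ha0
  have hmν : S.ν (m 0 0) = 0 := by rw [hm00, S.ν_mul hp0 ha0, hpν, haν]; ring
  obtain ⟨x, hx, t₂, ht₂, hxt0⟩ := hm2
  obtain ⟨p', hp', w', hw', rfl⟩ := hx
  rw [Set.mem_singleton_iff] at hw'
  subst hw'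
  obtain ⟨a', b', rfl, hnorm', -⟩ := ht₂
  have hxt : (p' * S.wmat) * !![a', b' * 1; b' * γ₂, a'] = m := hxt0
  rw [one_mul] at hnorm'
  obtain ⟨-, -, hb'O⟩ := S.torus_val hγ0 hγν hnorm'
  obtain ⟨hp'0, hp'ν⟩ := S.Bop_unit hp'
  have hpw : ∀ j, (p' * S.wmat) 0 j = p' 0 (if j = 0 then 1 else 0) := by
    intro j
    fin_cases j <;>
      · rw [Matrix.mul_apply, Fin.sum_univ_two]
        have e1 : S.wmat 0 0 = 0 := rfl
        have e2 : S.wmat 1 0 = 1 := rfl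
        have e3 : S.wmat 0 1 = 1 := rfl
        have e4 : S.wmat 1 1 = 0 := rfl
        simp [e1, e2, e3, e4]
  have hm00' : m 0 0 = p' 0 0 * (b' * γ₂) := by
    rw [← hxt, Matrix.mul_apply, Fin.sum_univ_two]
    have e1 : (!![a', b' * 1; b' * γ₂, a']) 0 0 = a' := rfl
    have e2 : (!![a', b' * 1; b' * γ₂, a']) 1 0 = b' * γ₂ := rfl
    rw [e1, e2, hpw 0, hpw 1]
    simp [hp'.2]
  by_cases hb'0 : b' = 0
  · rw [hm00', hb'0, zero_mul, mul_zero] at hm0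
    exact hm0 rfl
  · have hb'ν : 0 ≤ S.ν b' := hb'O.resolve_left hb'0
    have hν : S.ν (m 0 0) = S.ν (p' 0 0) + (S.ν b' + S.ν γ₂) := by
      rw [hm00', S.ν_mul hp'0 (mul_ne_zero hb'0 hγ0), S.ν_mul hb'0 hγ0]
    rw [hmν, hp'ν, hγν] at hν
    omega

end Setting

/-- For `(γ₁,γ₂) ∈ {(1,ϖ), (1,ε⁻¹ϖ)}` (the ramified cases),
`K = B^op·T_{γ₁,γ₂} ∪ B^op·w·T_{γ₁,γ₂}`, and the two double cosets are disjoint. -/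
theorem statement13 {E : Type*} [Field E] (S : Setting E) (γ₁ γ₂ : E)
    (hpair : (γ₁, γ₂) = ((1 : E), S.ϖ) ∨ (γ₁, γ₂) = ((1 : E), S.ε⁻¹ * S.ϖ)) :
    S.Kset = (S.Bop * S.Tset γ₁ γ₂) ∪ (S.Bop * {S.wmat} * S.Tset γ₁ γ₂) ∧
    Disjoint (S.Bop * S.Tset γ₁ γ₂) (S.Bop * {S.wmat} * S.Tset γ₁ γ₂) := by
  have hγ₁ : γ₁ = 1 := by
    rcases hpair with h | h <;> exact congrArg Prod.fst h
  have hγeq : γ₂ = S.ϖ ∨ γ₂ = S.ε⁻¹ * S.ϖ := by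
    rcases hpair with h | h
    · exact Or.inl (congrArg Prod.snd h)
    · exact Or.inr (congrArg Prod.snd h)
  subst hγ₁
  have hγF : S.σ γ₂ = γ₂ := by
    rcases hγeq with h | h
    · rw [h]; exact S.ϖ_fixed
    · rw [h, _root_.map_mul, map_inv₀, S.ε_fixed, S.ϖ_fixed]
  have hγ0 : γ₂ ≠ 0 := by
    rcases hγeq with h | h
    · rw [h]; exact S.ϖ_ne_zero
    · rw [h]; exact mul_ne_zero (inv_ne_zero S.ε_ne_zero) S.ϖ_ne_zero
  have hγν : S.ν γ₂ = 1 := by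
    rcases hγeq with h | h
    · rw [h]; exact S.ν_ϖ
    · rw [h, S.ν_mul (inv_ne_zero S.ε_ne_zero) S.ϖ_ne_zero, S.ν_inv S.ε_ne_zero,
        S.ν_ε, S.ν_ϖ]
      omega
  refine ⟨Set.Subset.antisymm (fun k hk => S.key_mem hγF hγ0 hγν hk) ?_, S.key_disj hγ0 hγν⟩
  intro k hk
  rcases hk with hk | hk
  · obtain ⟨p, hp, t, ht, hpt⟩ := hk
    have hpt' : p * t = k := hpt
    rw [← hpt']
    exact S.Kset_mul hp.1 (S.T_subset_K rfl hγF hγ0 hγν ht)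
  · obtain ⟨x, hx, t, ht, hxt⟩ := hk
    obtain ⟨p, hp, w', hw', rfl⟩ := hx
    rw [Set.mem_singleton_iff] at hw'
    subst hw'
    have hxt' : (p * S.wmat) * t = k := hxt
    rw [← hxt']
    exact S.Kset_mul (S.Kset_mul hp.1 S.w_inK) (S.T_subset_K rfl hγF hγ0 hγν ht)
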